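/- Let $P_{XY}$ be a joint probability mass function on $\mathcal{X}\times\mathcal{Y}$ with $|\mathcal{X}|=M$ finite and $\mathcal{Y}$ finite, and let $1\le L<M$. Suppose the list decoder $\mathcal{L}\colon\mathcal{Y}\to\binom{\mathcal{X}}{L}$ selects, for every $y\in\mathcal{Y}$, the $L$ most probable elements of $\mathcal{X}$ given $Y=y$ (ties resolved arbitrarily), and let $P_{\mathcal{L}}=\mathbb{P}[X\notin\mathcal{L}(Y)]$. Let $f\colon(0,\infty)\to\mathbb{R}$ be convex with $f(1)=0$ and twice differentiable, with $f''(t)\ge m_f>0$ for all $t\in[\xi_1^*,\xi_2^*]\cap(0,\infty)$, where $\xi_1^*=M\inf_{(x,y)}P_{X|Y}(x|y)$ and $\xi_2^*=M\sup_{(x,y)}P_{X|Y}(x|y)$. Then $\mathbb{E}\bigl[D_f(P_{X|Y}(\cdot|Y)\,\|\,U_M)\bigr]\;\ge\;\frac{L}{M}\,f\!\left(\frac{M(1-P_{\mathcal{L}})}{L}\right)+\left(1-\frac{L}{M}\right)f\!\left(\frac{M P_{\mathcal{L}}}{M-L}\right)+\tfrac12 m_f M\left(\mathbb{E}[P_{X|Y}(X|Y)]-\frac{1-P_{\mathcal{L}}}{L}\right)$.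 -/

import Mathlib

open scoped BigOperators

open Set Filter

set_option maxHeartbeats 2000000




/-- Strong-convexity tangent bound on positive points. -/
lemma fano_aux_taylor_pos (f : ℝ → ℝ) (ξ₁ ξ₂ mf : ℝ)
    (hd1 : ∀ t ∈ Set.Ioi (0 : ℝ), DifferentiableAt ℝ f t)
    (hd2 : ∀ t ∈ Set.Ioi (0 : ℝ), DifferentiableAt ℝ (deriv f) t)
    (hf'' : ∀ t ∈ Set.Icc ξ₁ ξ₂ ∩ Set.Ioi 0, mf ≤ deriv (deriv f) t)
    (hmf : 0 ≤ mf)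
    (v : ℝ) (hv : v ∈ Set.Icc ξ₁ ξ₂) (hv0 : 0 < v)
    (u : ℝ) (hu : u ∈ Set.Icc ξ₁ ξ₂) (hu0 : 0 < u) :
    f v + deriv f v * (u - v) + mf / 2 * (u - v) ^ 2 ≤ f u := by
  set J : Set ℝ := Set.Icc ξ₁ ξ₂ ∩ Set.Ioi 0 with hJ
  have hJconv : Convex ℝ J := (convex_Icc _ _).inter (convex_Ioi _)
  have hJIoi : J ⊆ Set.Ioi 0 := Set.inter_subset_right
  set g : ℝ → ℝ := fun t => f t - mf / 2 * t ^ 2 with hg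
  have hgd : ∀ t ∈ Set.Ioi (0:ℝ), DifferentiableAt ℝ g t := fun t ht =>
    (hd1 t ht).sub (by fun_prop)
  have hderivg : ∀ t ∈ Set.Ioi (0:ℝ), deriv g t = deriv f t - mf * t := by
    intro t ht
    rw [hg]
    rw [deriv_fun_sub (hd1 t ht) (by fun_prop)]
    simp [deriv_const_mul, mul_comm]
    ring
  have hderivg2 : ∀ t ∈ Set.Ioi (0:ℝ), deriv (deriv g) t = deriv (deriv f) t - mf := by
    intro t ht
    have hev : deriv g =ᶠ[nhds t] (fun s => deriv f s - mf * s) := by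
      filter_upwards [isOpen_Ioi.mem_nhds ht] with s hs using hderivg s hs
    have hm : deriv (fun s => mf * s) t = mf := by
      simpa using ((hasDerivAt_id t).const_mul mf).deriv
    rw [hev.deriv_eq, deriv_fun_sub (hd2 t ht) (by fun_prop), hm]
  have hgconv : ConvexOn ℝ J g := by
    apply convexOn_of_deriv2_nonneg hJconv
    · exact fun t ht => ((hgd t (hJIoi ht)).continuousAt).continuousWithinAt
    · exact fun t ht => ((hgd t (hJIoi (interior_subset ht))).differentiableWithinAt)
    · intro t ht
      have := hd2 t (hJIoi (interior_subset ht))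
      have : DifferentiableAt ℝ (deriv g) t := by
        have hev : deriv g =ᶠ[nhds t] (fun s => deriv f s - mf * s) := by
          filter_upwards [isOpen_Ioi.mem_nhds (hJIoi (interior_subset ht))] with s hs using
            hderivg s hs
        rw [hev.differentiableAt_iff]
        exact (hd2 t (hJIoi (interior_subset ht))).sub (by fun_prop)
      exact this.differentiableWithinAt
    · intro t ht
      have ht' := interior_subset ht
      have h2 : deriv^[2] g t = deriv (deriv g) t := by simp [Function.iterate_succ]
      rw [h2, hderivg2 t (hJIoi ht')]
      have := hf'' t ht'
      linarith
  have hvJ : v ∈ J := ⟨hv, hv0⟩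
  have huJ : u ∈ J := ⟨hu, hu0⟩
  have hgv : deriv g v = deriv f v - mf * v := hderivg v hv0
  have key : g v + deriv g v * (u - v) ≤ g u := by
    rcases lt_trichotomy v u with h | h | h
    · have := hgconv.deriv_le_slope hvJ huJ h (hgd v hv0)
      rw [slope_def_field] at this
      have hne : u - v > 0 := by linarith
      calc g v + deriv g v * (u - v) ≤ g v + (g u - g v) / (u - v) * (u - v) := by
            apply add_le_add le_rfl
            exact mul_le_mul_of_nonneg_right this hne.le
        _ = g u := by field_simp; ring
    · simp [h]
    · have := hgconv.slope_le_deriv huJ hvJ h (hgd v hv0)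
      rw [slope_def_field] at this
      have hne : v - u > 0 := by linarith
      have h2 : g v - g u ≤ deriv g v * (v - u) := by
        rw [div_le_iff₀ hne] at this; linarith
      nlinarith
  have : f v - mf/2*v^2 + (deriv f v - mf*v) * (u - v) ≤ f u - mf/2*u^2 := by
    rw [hgv] at key; rw [hg] at key; simpa using key
  nlinarith

lemma fano_aux_taylor (f : ℝ → ℝ) (ξ₁ ξ₂ mf : ℝ)
    (hd1 : ∀ t ∈ Set.Ioi (0 : ℝ), DifferentiableAt ℝ f t)
    (hd2 : ∀ t ∈ Set.Ioi (0 : ℝ), DifferentiableAt ℝ (deriv f) t)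
    (hf'' : ∀ t ∈ Set.Icc ξ₁ ξ₂ ∩ Set.Ioi 0, mf ≤ deriv (deriv f) t)
    (hf0 : Filter.Tendsto f (nhdsWithin 0 (Set.Ioi 0)) (nhds (f 0)))
    (hmf : 0 ≤ mf)
    (v : ℝ) (hv : v ∈ Set.Icc ξ₁ ξ₂) (hv0 : 0 < v)
    (u : ℝ) (hu : u ∈ Set.Icc ξ₁ ξ₂) (hu0 : 0 ≤ u) :
    f v + deriv f v * (u - v) + mf / 2 * (u - v) ^ 2 ≤ f u := by
  rcases hu0.lt_or_eq with h | h
  · exact fano_aux_taylor_pos f ξ₁ ξ₂ mf hd1 hd2 hf'' hmf v hv hv0 u hu h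
  · subst h
    have hξ₁0 : ξ₁ ≤ 0 := hu.1
    have h1 : Tendsto (fun t => f v + deriv f v * (t - v) + mf / 2 * (t - v) ^ 2)
        (nhdsWithin 0 (Set.Ioi 0))
        (nhds (f v + deriv f v * (0 - v) + mf / 2 * (0 - v) ^ 2)) :=
      (Continuous.tendsto (by continuity) 0).mono_left nhdsWithin_le_nhds
    refine le_of_tendsto_of_tendsto h1 hf0 ?_
    have hmem : Set.Ioo (0:ℝ) v ∈ nhdsWithin 0 (Set.Ioi 0) := by
      rw [show Set.Ioo (0:ℝ) v = Set.Ioi 0 ∩ Set.Iio v from (Set.Ioi_inter_Iio).symm]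
      exact inter_mem self_mem_nhdsWithin (mem_nhdsWithin_of_mem_nhds (Iio_mem_nhds hv0))
    filter_upwards [hmem] with t ht
    exact fano_aux_taylor_pos f ξ₁ ξ₂ mf hd1 hd2 hf'' hmf v hv hv0 t
      ⟨le_of_lt (lt_of_le_of_lt hξ₁0 ht.1), le_trans ht.2.le hv.2⟩ ht.1

lemma fano_aux_convexIci (f : ℝ → ℝ)
    (hf : ConvexOn ℝ (Set.Ioi 0) f)
    (hc : ∀ z ∈ Set.Ioi (0:ℝ), ContinuousAt f z)
    (hf0 : Filter.Tendsto f (nhdsWithin 0 (Set.Ioi 0)) (nhds (f 0))) :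
    ConvexOn ℝ (Set.Ici 0) f := by
  have key : ∀ y : ℝ, 0 < y → ∀ a b : ℝ, 0 ≤ a → 0 ≤ b → a + b = 1 →
      f (b * y) ≤ a * f 0 + b * f y := by
    intro y hy a b ha hb hab
    rcases hb.lt_or_eq with hb0 | hb0
    · rcases ha.lt_or_eq with ha0 | ha0
      · -- 0 < a, 0 < b : limit argument
        have hby : 0 < b * y := mul_pos hb0 hy
        have h1 : Tendsto (fun t => f (a * t + b * y)) (nhdsWithin 0 (Set.Ioi 0))
            (nhds (f (b * y))) := by
          have ht : Tendsto (fun t : ℝ => a * t + b * y) (nhdsWithin 0 (Set.Ioi 0))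
              (nhds (b * y)) := by
            have : Tendsto (fun t : ℝ => a * t + b * y) (nhds 0) (nhds (a * 0 + b * y)) :=
              (Continuous.tendsto (by continuity) 0)
            simpa using this.mono_left nhdsWithin_le_nhds
          exact (hc _ hby).tendsto.comp ht
        have h2 : Tendsto (fun t => a * f t + b * f y) (nhdsWithin 0 (Set.Ioi 0))
            (nhds (a * f 0 + b * f y)) :=
          ((hf0.const_mul a).add_const (b * f y))
        refine le_of_tendsto_of_tendsto h1 h2 ?_
        filter_upwards [self_mem_nhdsWithin] with t ht
        have := hf.2 ht hy ha hb hab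
        simpa [smul_eq_mul] using this
      · -- a = 0, b = 1
        have hb1 : b = 1 := by linarith
        simp [← ha0, hb1]
    · -- b = 0
      have ha1 : a = 1 := by linarith
      simp [← hb0, ha1]
  refine ⟨convex_Ici 0, ?_⟩
  intro x hx y hy a b ha hb hab
  rcases (Set.mem_Ici.mp hx).lt_or_eq with hx0 | hx0
  · rcases (Set.mem_Ici.mp hy).lt_or_eq with hy0 | hy0
    · have := hf.2 hx0 hy0 ha hb hab
      simpa [smul_eq_mul] using this
    · -- y = 0
      have := key x hx0 b a hb ha (by linarith)
      simpa [smul_eq_mul, ← hy0, add_comm] using this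
  · -- x = 0
    rcases (Set.mem_Ici.mp hy).lt_or_eq with hy0 | hy0
    · have := key y hy0 a b ha hb hab
      simpa [smul_eq_mul, ← hx0] using this
    · simp [← hx0, ← hy0, ← add_mul, hab]



lemma fano_aux_sum_quad {X : Type*} (S : Finset X) (q : X → ℝ) (A B C : ℝ) :
    ∑ x ∈ S, (A + B * q x + C * q x ^ 2)
      = (S.card : ℝ) * A + B * ∑ x ∈ S, q x + C * ∑ x ∈ S, q x ^ 2 := by
  rw [Finset.sum_add_distrib, Finset.sum_add_distrib, Finset.sum_const, ← Finset.mul_sum,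
    ← Finset.mul_sum, nsmul_eq_mul]

lemma fano_aux_pery {X : Type*} [Fintype X] [DecidableEq X]
    (M L : ℕ) (hM : Fintype.card X = M) (hL1 : 1 ≤ L) (hLM : L < M)
    (q : X → ℝ) (hq : ∀ x, 0 ≤ q x) (hq1 : ∑ x, q x = 1)
    (S : Finset X) (hS : S.card = L)
    (hmap : ∀ x ∈ S, ∀ x' ∉ S, q x' ≤ q x)
    (f : ℝ → ℝ) (ξ₁ ξ₂ mf : ℝ) (hmf : 0 ≤ mf)
    (htaylor : ∀ v ∈ Set.Icc ξ₁ ξ₂, 0 < v → ∀ u ∈ Set.Icc ξ₁ ξ₂, 0 ≤ u →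
      f v + deriv f v * (u - v) + mf / 2 * (u - v) ^ 2 ≤ f u)
    (hrange : ∀ x, (M : ℝ) * q x ∈ Set.Icc ξ₁ ξ₂) :
    ((L : ℝ) / M) * f ((M : ℝ) * (∑ x ∈ S, q x) / L)
      + (((M : ℝ) - L) / M) * f ((M : ℝ) * (1 - ∑ x ∈ S, q x) / ((M : ℝ) - L))
      + mf / 2 * M * ((∑ x, q x ^ 2) - (∑ x ∈ S, q x) / L)
      ≤ (1 / (M : ℝ)) * ∑ x, f ((M : ℝ) * q x) := by
  have hL0 : (0 : ℝ) < L := by exact_mod_cast hL1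
  have hM0 : (0 : ℝ) < M := by exact_mod_cast (lt_of_le_of_lt (Nat.zero_le L) hLM)
  have hML : (0 : ℝ) < (M : ℝ) - L := by
    have : (L : ℝ) < M := by exact_mod_cast hLM
    linarith
  set a : ℝ := ∑ x ∈ S, q x with ha
  have hcard_compl : (Sᶜ.card : ℝ) = (M : ℝ) - L := by
    rw [Finset.card_compl, hS, hM, Nat.cast_sub hLM.le]
  have hcompl_sum : ∑ x ∈ Sᶜ, q x = 1 - a := by
    have := Finset.sum_add_sum_compl S q
    rw [hq1] at this; linarith
  have ha0 : 0 ≤ a := Finset.sum_nonneg fun x _ => hq x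
  have ha1 : a ≤ 1 := by
    have : 0 ≤ ∑ x ∈ Sᶜ, q x := Finset.sum_nonneg fun x _ => hq x
    linarith [hcompl_sum]
  -- a > 0
  have hapos : 0 < a := by
    by_contra h
    push_neg at h
    have haz : a = 0 := le_antisymm h ha0
    have hSz : ∀ x ∈ S, q x = 0 := by
      intro x hx
      have := (Finset.sum_eq_zero_iff_of_nonneg (fun x _ => hq x)).mp haz
      exact this x hx
    obtain ⟨x₁, hx₁⟩ := Finset.card_pos.mp (by rw [hS]; omega)
    have hall : ∀ x', q x' = 0 := by
      intro x'
      by_cases hx' : x' ∈ S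
      · exact hSz x' hx'
      · exact le_antisymm (le_trans (hmap x₁ hx₁ x' hx') (le_of_eq (hSz x₁ hx₁))) (hq x')
    simp [hall] at hq1
  set v₁ : ℝ := (M : ℝ) * a / L with hv₁def
  set v₂ : ℝ := (M : ℝ) * (1 - a) / ((M : ℝ) - L) with hv₂def
  have hv₁pos : 0 < v₁ := div_pos (mul_pos hM0 hapos) hL0
  -- membership of averages in [ξ₁, ξ₂]
  have havg : ∀ (T : Finset X), T.Nonempty → ((M : ℝ) * ∑ x ∈ T, q x) / T.card ∈ Set.Icc ξ₁ ξ₂ := by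
    intro T hT
    have hTc : (0 : ℝ) < T.card := by exact_mod_cast Finset.card_pos.mpr hT
    constructor
    · rw [le_div_iff₀ hTc]
      have : ∑ x ∈ T, ξ₁ ≤ ∑ x ∈ T, (M : ℝ) * q x := Finset.sum_le_sum fun x _ => (hrange x).1
      rw [Finset.sum_const, nsmul_eq_mul, ← Finset.mul_sum] at this
      linarith [this]
    · rw [div_le_iff₀ hTc]
      have : ∑ x ∈ T, (M : ℝ) * q x ≤ ∑ x ∈ T, ξ₂ := Finset.sum_le_sum fun x _ => (hrange x).2
      rw [Finset.sum_const, nsmul_eq_mul, ← Finset.mul_sum] at this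
      linarith [this]
  have hSne : S.Nonempty := Finset.card_pos.mp (by rw [hS]; omega)
  have hScne : Sᶜ.Nonempty := by
    rw [← Finset.card_pos]
    have : Sᶜ.card = M - L := by rw [Finset.card_compl, hS, hM]
    omega
  have hv₁mem : v₁ ∈ Set.Icc ξ₁ ξ₂ := by
    have := havg S hSne
    rw [hS] at this
    exact this
  have hv₂mem : v₂ ∈ Set.Icc ξ₁ ξ₂ := by
    have := havg Sᶜ hScne
    rw [hcompl_sum] at this
    rw [hv₂def]
    rwa [show ((Sᶜ.card : ℕ) : ℝ) = (M : ℝ) - L from hcard_compl] at this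
  have hv₂nonneg : 0 ≤ v₂ :=
    div_nonneg (mul_nonneg hM0.le (by linarith)) hML.le
  -- in-list bound
  have hinb : (L : ℝ) * f v₁ + mf / 2 * ((M:ℝ)^2 * (∑ x ∈ S, q x ^ 2) - (M:ℝ)^2 * a^2 / L)
      ≤ ∑ x ∈ S, f ((M : ℝ) * q x) := by
    have hpt : ∀ x ∈ S, f v₁ + deriv f v₁ * ((M:ℝ) * q x - v₁) + mf/2 * ((M:ℝ)*q x - v₁)^2
        ≤ f ((M:ℝ) * q x) := fun x _ =>
      htaylor v₁ hv₁mem hv₁pos _ (hrange x) (mul_nonneg hM0.le (hq x))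
    have hsum := Finset.sum_le_sum hpt
    have hrw : ∀ x : X, f v₁ + deriv f v₁ * ((M:ℝ) * q x - v₁) + mf/2 * ((M:ℝ)*q x - v₁)^2
        = (f v₁ - deriv f v₁ * v₁ + mf/2 * v₁^2)
          + (deriv f v₁ * M - mf * M * v₁) * q x + (mf/2 * M^2) * q x ^ 2 := fun x => by ring
    rw [Finset.sum_congr rfl (fun x _ => hrw x), fano_aux_sum_quad, hS] at hsum
    have : (L:ℝ) * (f v₁ - deriv f v₁ * v₁ + mf/2 * v₁^2)
          + (deriv f v₁ * M - mf * M * v₁) * a + (mf/2 * M^2) * (∑ x ∈ S, q x ^ 2)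
        = (L : ℝ) * f v₁ + mf / 2 * ((M:ℝ)^2 * (∑ x ∈ S, q x ^ 2) - (M:ℝ)^2 * a^2 / L) := by
      rw [hv₁def]; field_simp; ring
    rw [← ha, this] at hsum
    exact hsum
  -- out-of-list bound
  have houtb : ((M:ℝ) - L) * f v₂
        + mf / 2 * ((M:ℝ)^2 * (∑ x ∈ Sᶜ, q x ^ 2) - (M:ℝ)^2 * (1-a)^2 / ((M:ℝ) - L))
      ≤ ∑ x ∈ Sᶜ, f ((M : ℝ) * q x) := by
    rcases hv₂nonneg.lt_or_eq with hv₂pos | hv₂zero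
    · have hpt : ∀ x ∈ Sᶜ, f v₂ + deriv f v₂ * ((M:ℝ) * q x - v₂) + mf/2 * ((M:ℝ)*q x - v₂)^2
          ≤ f ((M:ℝ) * q x) := fun x _ =>
        htaylor v₂ hv₂mem hv₂pos _ (hrange x) (mul_nonneg hM0.le (hq x))
      have hsum := Finset.sum_le_sum hpt
      have hrw : ∀ x : X, f v₂ + deriv f v₂ * ((M:ℝ) * q x - v₂) + mf/2 * ((M:ℝ)*q x - v₂)^2
          = (f v₂ - deriv f v₂ * v₂ + mf/2 * v₂^2)
            + (deriv f v₂ * M - mf * M * v₂) * q x + (mf/2 * M^2) * q x ^ 2 := fun x => by ring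
      rw [Finset.sum_congr rfl (fun x _ => hrw x), fano_aux_sum_quad, hcard_compl,
        hcompl_sum] at hsum
      have : ((M:ℝ) - L) * (f v₂ - deriv f v₂ * v₂ + mf/2 * v₂^2)
            + (deriv f v₂ * M - mf * M * v₂) * (1 - a) + (mf/2 * M^2) * (∑ x ∈ Sᶜ, q x ^ 2)
          = ((M:ℝ) - L) * f v₂
            + mf / 2 * ((M:ℝ)^2 * (∑ x ∈ Sᶜ, q x ^ 2) - (M:ℝ)^2 * (1-a)^2 / ((M:ℝ) - L)) := by
        rw [hv₂def]; field_simp; ring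
      rw [this] at hsum
      exact hsum
    · -- v₂ = 0 : all q x = 0 on Sᶜ
      have h1a : 1 - a = 0 := by
        have := hv₂zero.symm
        rw [hv₂def, div_eq_zero_iff] at this
        rcases this with h | h
        · rcases mul_eq_zero.mp h with h' | h'
          · exact absurd h' (ne_of_gt hM0)
          · exact h'
        · exact absurd h (ne_of_gt hML)
      have hz : ∀ x ∈ Sᶜ, q x = 0 := by
        have hsc : ∑ x ∈ Sᶜ, q x = 0 := by rw [hcompl_sum, h1a]
        exact fun x hx => (Finset.sum_eq_zero_iff_of_nonneg (fun x _ => hq x)).mp hsc x hx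
      have h2 : ∑ x ∈ Sᶜ, q x ^ 2 = 0 := Finset.sum_eq_zero fun x hx => by rw [hz x hx]; ring
      have h3 : ∑ x ∈ Sᶜ, f ((M:ℝ) * q x) = ((M:ℝ) - L) * f 0 := by
        rw [Finset.sum_congr rfl (fun x hx => by rw [hz x hx, mul_zero]), Finset.sum_const,
          nsmul_eq_mul, hcard_compl]
      rw [h3, h2, h1a, ← hv₂zero]
      simp
  -- MAP inequality : (1-a) * L ≤ a * (M - L)
  have hmapsum : (1 - a) * L ≤ a * ((M:ℝ) - L) := by
    have hds : ∑ x ∈ S, ∑ x' ∈ Sᶜ, q x' ≤ ∑ x ∈ S, ∑ x' ∈ Sᶜ, q x :=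
      Finset.sum_le_sum fun x hx => Finset.sum_le_sum fun x' hx' =>
        hmap x hx x' (Finset.mem_compl.mp hx')
    have hL : ∑ x ∈ S, ∑ x' ∈ Sᶜ, q x' = (L:ℝ) * (1 - a) := by
      rw [Finset.sum_const, hcompl_sum, nsmul_eq_mul, hS]
    have hR : ∑ x ∈ S, ∑ x' ∈ Sᶜ, q x = ((M:ℝ) - L) * a := by
      rw [Finset.sum_congr rfl (fun x _ => by
        rw [Finset.sum_const, nsmul_eq_mul, hcard_compl]), ← Finset.mul_sum, ← ha]
    rw [hL, hR] at hds
    linarith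
  have hkey2 : a^2 / L + (1-a)^2 / ((M:ℝ) - L) ≤ a / L := by
    rw [div_add_div _ _ (ne_of_gt hL0) (ne_of_gt hML), div_le_div_iff₀ (by positivity) hL0]
    nlinarith [mul_le_mul_of_nonneg_left hmapsum (by linarith : (0:ℝ) ≤ 1 - a)]
  clear_value a v₁ v₂
  set QS := ∑ x ∈ S, q x ^ 2 with hQSdef
  set QC := ∑ x ∈ Sᶜ, q x ^ 2 with hQCdef
  set FS := ∑ x ∈ S, f ((M:ℝ) * q x) with hFSdef
  set FC := ∑ x ∈ Sᶜ, f ((M:ℝ) * q x) with hFCdef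
  set TQ := ∑ x : X, q x ^ 2 with hTQdef
  set TF := ∑ x : X, f ((M:ℝ) * q x) with hTFdef
  clear_value QS QC FS FC TQ TF
  -- combine
  have hsplit : TF = FS + FC := by
    rw [hTFdef, hFSdef, hFCdef]; exact (Finset.sum_add_sum_compl S _).symm
  have hsplit2 : TQ = QS + QC := by
    rw [hTQdef, hQSdef, hQCdef]; exact (Finset.sum_add_sum_compl S _).symm
  have hC : mf/2 * (M:ℝ)^2 * ((a^2/L + (1-a)^2/((M:ℝ)-L)) - a/L) ≤ 0 :=
    mul_nonpos_of_nonneg_of_nonpos (by positivity) (by linarith)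
  rw [one_div, inv_mul_eq_div, le_div_iff₀ hM0]
  calc ((L : ℝ) / M * f v₁ + ((M:ℝ) - L) / M * f v₂
        + mf / 2 * M * (TQ - a / L)) * M
      = ((L : ℝ) * f v₁ + mf / 2 * ((M:ℝ)^2 * QS - (M:ℝ)^2 * a^2 / L))
        + (((M:ℝ) - L) * f v₂
          + mf / 2 * ((M:ℝ)^2 * QC - (M:ℝ)^2 * (1-a)^2 / ((M:ℝ) - L)))
        + mf/2 * (M:ℝ)^2 * ((a^2/L + (1-a)^2/((M:ℝ)-L)) - a/L) := by
        rw [hsplit2]; field_simp; ring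
    _ ≤ FS + FC + 0 :=
        add_le_add (add_le_add hinb houtb) hC
    _ = TF := by rw [add_zero, ← hsplit]

/-- **Refined generalized Fano inequality for the maximum-a-posteriori (MAP) fixed-size
list decoder.**  The list decoder `Lst` selects, for every observation `y` (with
`P_Y(y) > 0`), the `L` most probable elements of `X` given `Y = y`; in this case the
positive-part operation in the refinement can be dropped together with the term
`PL/(M-L)`, strengthening the bound. -/
theorem refined_generalized_fano_f_divergence_map_decoder
    {X Y : Type*} [Fintype X] [Fintype Y] [DecidableEq X]
    (M L : ℕ) (hM : Fintype.card X = M) (hL1 : 1 ≤ L) (hLM : L < M)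
    (P : X → Y → ℝ) (hP : ∀ x y, 0 ≤ P x y) (hPsum : ∑ x, ∑ y, P x y = 1)
    (Lst : Y → Finset X) (hLst : ∀ y, (Lst y).card = L)
    (hMAP : ∀ y, 0 < ∑ x', P x' y → ∀ x ∈ Lst y, ∀ x' ∉ Lst y,
      P x' y / ∑ x'', P x'' y ≤ P x y / ∑ x'', P x'' y)
    (f : ℝ → ℝ) (hf : ConvexOn ℝ (Set.Ioi 0) f) (hf1 : f 1 = 0)
    (hf0 : Filter.Tendsto f (nhdsWithin 0 (Set.Ioi 0)) (nhds (f 0)))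
    (hd1 : ∀ t ∈ Set.Ioi (0 : ℝ), DifferentiableAt ℝ f t)
    (hd2 : ∀ t ∈ Set.Ioi (0 : ℝ), DifferentiableAt ℝ (deriv f) t)
    (ξ₁ ξ₂ : ℝ)
    (hξ₁ : ξ₁ = (M : ℝ) * sInf {p : ℝ | ∃ x y, 0 < ∑ x', P x' y ∧
                    p = P x y / ∑ x', P x' y})
    (hξ₂ : ξ₂ = (M : ℝ) * sSup {p : ℝ | ∃ x y, 0 < ∑ x', P x' y ∧
                    p = P x y / ∑ x', P x' y})
    (mf : ℝ) (hmf : 0 < mf)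
    (hf'' : ∀ t ∈ Set.Icc ξ₁ ξ₂ ∩ Set.Ioi 0, mf ≤ deriv (deriv f) t)
    (PL : ℝ) (hPL : PL = ∑ y, ∑ x ∈ (Lst y)ᶜ, P x y) :
    ∑ y, (∑ x, P x y) *
        (∑ x : X, (1 / (M : ℝ)) * f ((P x y / ∑ x', P x' y) / (1 / (M : ℝ))))
      ≥ ((L : ℝ) / M) * f ((M : ℝ) * (1 - PL) / L)
        + (1 - (L : ℝ) / M) * f ((M : ℝ) * PL / ((M : ℝ) - L))
        + (1 / 2) * mf * M *
            ((∑ y, ∑ x, P x y * (P x y / ∑ x', P x' y)) - (1 - PL) / L) := by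
  have hL0 : (0 : ℝ) < L := by exact_mod_cast hL1
  have hM0 : (0 : ℝ) < M := by exact_mod_cast (lt_of_le_of_lt (Nat.zero_le L) hLM)
  have hML : (0 : ℝ) < (M : ℝ) - L := by
    have : (L : ℝ) < M := by exact_mod_cast hLM
    linarith
  have hQ0 : ∀ y, 0 ≤ ∑ x, P x y := fun y => Finset.sum_nonneg fun x _ => hP x y
  have hQsum : ∑ y, ∑ x, P x y = 1 := by rw [Finset.sum_comm]; exact hPsum
  -- boundedness of the set of conditional probabilities
  set T : Set ℝ := {p : ℝ | ∃ x y, 0 < ∑ x', P x' y ∧ p = P x y / ∑ x', P x' y} with hT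
  have hTfin : T.Finite := by
    apply Set.Finite.subset (Set.finite_range (fun z : X × Y => P z.1 z.2 / ∑ x', P x' z.2))
    rintro p ⟨x, y, hy, rfl⟩
    exact ⟨(x, y), rfl⟩
  have hrange : ∀ y, 0 < ∑ x', P x' y → ∀ x : X,
      (M : ℝ) * (P x y / ∑ x', P x' y) ∈ Set.Icc ξ₁ ξ₂ := by
    intro y hy x
    constructor
    · rw [hξ₁]
      exact mul_le_mul_of_nonneg_left (csInf_le hTfin.bddBelow ⟨x, y, hy, rfl⟩) hM0.le
    · rw [hξ₂]
      exact mul_le_mul_of_nonneg_left (le_csSup hTfin.bddAbove ⟨x, y, hy, rfl⟩) hM0.le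
  have hIci : ConvexOn ℝ (Set.Ici 0) f :=
    fano_aux_convexIci f hf (fun z hz => (hd1 z hz).continuousAt) hf0
  have htaylor := fano_aux_taylor f ξ₁ ξ₂ mf hd1 hd2 hf'' hf0 hmf.le
  -- abbreviations
  set A : Y → ℝ := fun y => ∑ x ∈ Lst y, (P x y / ∑ x', P x' y) with hA
  set W : Y → ℝ := fun y => ∑ x, (P x y / ∑ x', P x' y) ^ 2 with hW
  have hA0 : ∀ y, 0 ≤ A y :=
    fun y => Finset.sum_nonneg fun x _ => div_nonneg (hP x y) (hQ0 y)
  have hQA : ∀ y, (∑ x, P x y) * A y = ∑ x ∈ Lst y, P x y := by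
    intro y
    rcases (hQ0 y).lt_or_eq with h | h
    · rw [hA, Finset.mul_sum]
      exact Finset.sum_congr rfl fun x _ => by
        rw [mul_comm, div_mul_cancel₀ _ (ne_of_gt h)]
    · have hz : ∀ x ∈ Finset.univ, P x y = 0 :=
        (Finset.sum_eq_zero_iff_of_nonneg (fun x _ => hP x y)).mp h.symm
      rw [← h, zero_mul]
      exact (Finset.sum_eq_zero fun x _ => hz x (Finset.mem_univ x)).symm
  have hQW : ∀ y, (∑ x, P x y) * W y = ∑ x, P x y * (P x y / ∑ x', P x' y) := by
    intro y
    rcases (hQ0 y).lt_or_eq with h | h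
    · rw [hW, Finset.mul_sum]
      exact Finset.sum_congr rfl fun x _ => by
        field_simp
    · have hz : ∀ x ∈ Finset.univ, P x y = 0 :=
        (Finset.sum_eq_zero_iff_of_nonneg (fun x _ => hP x y)).mp h.symm
      rw [← h, zero_mul]
      exact (Finset.sum_eq_zero fun x _ => by rw [hz x (Finset.mem_univ x), zero_mul]).symm
  have h1mPL : ∑ y, ∑ x ∈ Lst y, P x y = 1 - PL := by
    have hsp : ∑ y, (∑ x ∈ Lst y, P x y + ∑ x ∈ (Lst y)ᶜ, P x y) = 1 := by
      rw [Finset.sum_congr rfl fun y _ => Finset.sum_add_sum_compl (Lst y) (fun x => P x y)]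
      exact hQsum
    rw [Finset.sum_add_distrib] at hsp
    rw [hPL]
    linarith
  have hQAsum : ∑ y, (∑ x, P x y) * A y = 1 - PL := by
    rw [Finset.sum_congr rfl fun y _ => hQA y]
    exact h1mPL
  have hQ1Asum : ∑ y, (∑ x, P x y) * (1 - A y) = PL := by
    have : ∀ y, (∑ x, P x y) * (1 - A y) = (∑ x, P x y) - (∑ x, P x y) * A y :=
      fun y => by ring
    rw [Finset.sum_congr rfl fun y _ => this y, Finset.sum_sub_distrib, hQsum, hQAsum]
    ring
  have hQWsum : ∑ y, (∑ x, P x y) * W y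
      = ∑ y, ∑ x, P x y * (P x y / ∑ x', P x' y) := Finset.sum_congr rfl fun y _ => hQW y
  -- Jensen for the first term
  have hJ1 : f ((M : ℝ) * (1 - PL) / L) ≤ ∑ y, (∑ x, P x y) * f ((M : ℝ) * A y / L) := by
    have hjen := hIci.map_sum_le (t := Finset.univ) (w := fun y => ∑ x, P x y)
      (p := fun y => (M : ℝ) * A y / L) (fun y _ => hQ0 y) hQsum
      (fun y _ => Set.mem_Ici.mpr (div_nonneg (mul_nonneg hM0.le (hA0 y)) hL0.le))
    have hcenter : ∑ y, (∑ x, P x y) * ((M : ℝ) * A y / L) = (M : ℝ) * (1 - PL) / L := by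
      have : ∀ y, (∑ x, P x y) * ((M : ℝ) * A y / L)
          = ((M : ℝ) / L) * ((∑ x, P x y) * A y) := fun y => by ring
      rw [Finset.sum_congr rfl fun y _ => this y, ← Finset.mul_sum, hQAsum]
      ring
    simpa [smul_eq_mul, hcenter] using hjen
  have hJ2 : f ((M : ℝ) * PL / ((M : ℝ) - L))
      ≤ ∑ y, (∑ x, P x y) * f ((M : ℝ) * (1 - A y) / ((M : ℝ) - L)) := by
    have hA1 : ∀ y, A y ≤ 1 := by
      intro y
      rcases (hQ0 y).lt_or_eq with h | h
      · have hle : A y ≤ ∑ x, (P x y / ∑ x', P x' y) := by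
          rw [hA]
          exact Finset.sum_le_sum_of_subset_of_nonneg (Finset.subset_univ _)
            (fun x _ _ => div_nonneg (hP x y) (hQ0 y))
        have : ∑ x, (P x y / ∑ x', P x' y) = 1 := by
          rw [← Finset.sum_div, div_self (ne_of_gt h)]
        linarith
      · have hz : ∀ x ∈ Finset.univ, P x y = 0 :=
          (Finset.sum_eq_zero_iff_of_nonneg (fun x _ => hP x y)).mp h.symm
        have : A y = 0 := Finset.sum_eq_zero fun x hx => by
          rw [hz x (Finset.mem_univ x), zero_div]
        rw [this]; norm_num
    have hjen := hIci.map_sum_le (t := Finset.univ) (w := fun y => ∑ x, P x y)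
      (p := fun y => (M : ℝ) * (1 - A y) / ((M : ℝ) - L)) (fun y _ => hQ0 y) hQsum
      (fun y _ => Set.mem_Ici.mpr
        (div_nonneg (mul_nonneg hM0.le (by linarith [hA1 y])) hML.le))
    have hcenter : ∑ y, (∑ x, P x y) * ((M : ℝ) * (1 - A y) / ((M : ℝ) - L))
        = (M : ℝ) * PL / ((M : ℝ) - L) := by
      have : ∀ y, (∑ x, P x y) * ((M : ℝ) * (1 - A y) / ((M : ℝ) - L))
          = ((M : ℝ) / ((M : ℝ) - L)) * ((∑ x, P x y) * (1 - A y)) := fun y => by ring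
      rw [Finset.sum_congr rfl fun y _ => this y, ← Finset.mul_sum, hQ1Asum]
      ring
    simpa [smul_eq_mul, hcenter] using hjen
  -- per-observation bound
  have hpery : ∀ y,
      (∑ x, P x y) * (((L : ℝ) / M) * f ((M : ℝ) * A y / L)
          + (((M : ℝ) - L) / M) * f ((M : ℝ) * (1 - A y) / ((M : ℝ) - L))
          + mf / 2 * M * (W y - A y / L))
      ≤ (∑ x, P x y) * ((1 / (M : ℝ)) * ∑ x, f ((M : ℝ) * (P x y / ∑ x', P x' y))) := by
    intro y
    rcases (hQ0 y).lt_or_eq with h | h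
    · apply mul_le_mul_of_nonneg_left _ (hQ0 y)
      have hq1 : ∑ x, (P x y / ∑ x', P x' y) = 1 := by
        rw [← Finset.sum_div, div_self (ne_of_gt h)]
      have := fano_aux_pery M L hM hL1 hLM (fun x => P x y / ∑ x', P x' y)
        (fun x => div_nonneg (hP x y) (hQ0 y)) hq1 (Lst y) (hLst y)
        (fun x hx x' hx' => hMAP y h x hx x' hx') f ξ₁ ξ₂ mf hmf.le htaylor
        (fun x => hrange y h x)
      simpa [hA, hW] using this
    · rw [← h, zero_mul, zero_mul]
  have hsum := Finset.sum_le_sum (fun y (_ : y ∈ Finset.univ) => hpery y)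
  -- expand the left sum of hsum
  have hexp : ∑ y, (∑ x, P x y) * (((L : ℝ) / M) * f ((M : ℝ) * A y / L)
          + (((M : ℝ) - L) / M) * f ((M : ℝ) * (1 - A y) / ((M : ℝ) - L))
          + mf / 2 * M * (W y - A y / L))
      = ((L : ℝ) / M) * (∑ y, (∑ x, P x y) * f ((M : ℝ) * A y / L))
        + (((M : ℝ) - L) / M) *
            (∑ y, (∑ x, P x y) * f ((M : ℝ) * (1 - A y) / ((M : ℝ) - L)))
        + mf / 2 * M * ((∑ y, (∑ x, P x y) * W y) - (∑ y, (∑ x, P x y) * A y) / L) := by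
    have hptw : ∀ y, (∑ x, P x y) * (((L : ℝ) / M) * f ((M : ℝ) * A y / L)
          + (((M : ℝ) - L) / M) * f ((M : ℝ) * (1 - A y) / ((M : ℝ) - L))
          + mf / 2 * M * (W y - A y / L))
        = ((L : ℝ) / M) * ((∑ x, P x y) * f ((M : ℝ) * A y / L))
          + (((M : ℝ) - L) / M) * ((∑ x, P x y) * f ((M : ℝ) * (1 - A y) / ((M : ℝ) - L)))
          + (mf / 2 * M * ((∑ x, P x y) * W y) - mf / 2 * M * (((∑ x, P x y) * A y) / L)) :=
      fun y => by ring
    rw [Finset.sum_congr rfl fun y _ => hptw y, Finset.sum_add_distrib,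
      Finset.sum_add_distrib, Finset.sum_sub_distrib, ← Finset.mul_sum, ← Finset.mul_sum,
      ← Finset.mul_sum, ← Finset.mul_sum, ← Finset.sum_div]
    ring
  -- rewrite the goal's left-hand side
  have hLHS : ∑ y, (∑ x, P x y) *
        (∑ x : X, (1 / (M : ℝ)) * f ((P x y / ∑ x', P x' y) / (1 / (M : ℝ))))
      = ∑ y, (∑ x, P x y) *
          ((1 / (M : ℝ)) * ∑ x, f ((M : ℝ) * (P x y / ∑ x', P x' y))) := by
    refine Finset.sum_congr rfl fun y _ => ?_
    congr 1
    rw [Finset.mul_sum]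
    refine Finset.sum_congr rfl fun x _ => ?_
    rw [div_div_eq_mul_div, div_one, mul_comm (P x y / ∑ x', P x' y) ((M : ℝ))]
  rw [ge_iff_le, hLHS]
  rw [hexp, hQAsum, hQWsum] at hsum
  have hc1 : (0:ℝ) ≤ (L : ℝ) / M := by positivity
  have hc2 : (0:ℝ) ≤ ((M : ℝ) - L) / M := by positivity
  have h1 := mul_le_mul_of_nonneg_left hJ1 hc1
  have h2 := mul_le_mul_of_nonneg_left hJ2 hc2
  have heq1 : (1 : ℝ) - (L : ℝ) / M = ((M : ℝ) - L) / M := by field_simp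
  have heq2 : (1 : ℝ) / 2 * mf * (M:ℝ) = mf / 2 * M := by ring
  rw [heq1, heq2]
  linarith [hsum, h1, h2]
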